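/- (Theorem 3.1, Conditional DDIM inversion) Let $t \ge 1$, let $(\alpha_i)_{i=0}^t$ be reals with $0 < \alpha_i \le 1$ and $\alpha_0 = 1$, and define $\bar\alpha_i = \prod_{j=0}^{i}\alpha_j$. Let $g_i \in \mathbb{R}^d$ (playing the role of $\nabla_{x_i}\log p_\theta(x_i \mid y)$) and suppose the noise predictions satisfy $e_i = -\sqrt{1-\bar\alpha_i}\, g_{i-1} + \delta_i$ for vectors $\delta_i \in \mathbb{R}^d$, $1 \le i \le t$. If $(x_i)$ satisfies the inversion recursion $x_i = \sqrt{\alpha_i/\alpha_{i-1}}\, x_{i-1} + \sqrt{\alpha_i}\left(\sqrt{1/\alpha_i-1} - \sqrt{1/\alpha_{i-1}-1}\right) e_i$, then with $s_i := \sqrt{\alpha_t(1-\bar\alpha_{i+1})}\left(\sqrt{1/\alpha_{i+1}-1} - \sqrt{1/\alpha_i-1}\right)$ for $0 \le i \le t-1$, one has $x_t = \sqrt{\alpha_t}\, x_0 - \sum_{i=0}^{t-1} s_i\, g_i + \sum_{i=0}^{t-1} \frac{s_i}{\sqrt{1-\bar\alpha_{i+1}}}\, \delta_{i+1}$, provided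 $\bar\alpha_{i+1} < 1$ for all $0 \le i \le t-1$. -/

import Mathlib

open Finset

/-- Theorem 3.1 (abstract): conditional DDIM inversion moves the data point along the
negative gradient directions, up to correction terms. -/
theorem conditional_ddim_inversion (d t : ℕ) (ht : 1 ≤ t) (α : ℕ → ℝ)
    (hαpos : ∀ i ≤ t, 0 < α i) (hα1 : ∀ i ≤ t, α i ≤ 1) (hα0 : α 0 = 1)
    (ᾱ : ℕ → ℝ) (hᾱ : ∀ i, ᾱ i = ∏ j ∈ range (i + 1), α j)
    (hᾱlt : ∀ i ≤ t - 1, ᾱ (i + 1) < 1)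
    (g δ e : ℕ → Fin d → ℝ)
    (he : ∀ i, 1 ≤ i → i ≤ t →
      e i = (-Real.sqrt (1 - ᾱ i)) • g (i - 1) + δ i)
    (x : ℕ → Fin d → ℝ)
    (hrec : ∀ i, 1 ≤ i → i ≤ t →
      x i = Real.sqrt (α i / α (i - 1)) • x (i - 1) +
        (Real.sqrt (α i) *
          (Real.sqrt (1 / α i - 1) - Real.sqrt (1 / α (i - 1) - 1))) • e i)
    (s : ℕ → ℝ)
    (hs : ∀ i ≤ t - 1,
      s i = Real.sqrt (α t * (1 - ᾱ (i + 1))) *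
        (Real.sqrt (1 / α (i + 1) - 1) - Real.sqrt (1 / α i - 1))) :
    x t = Real.sqrt (α t) • x 0 - ∑ i ∈ range t, s i • g i +
      ∑ i ∈ range t, (s i / Real.sqrt (1 - ᾱ (i + 1))) • δ (i + 1) := by
  -- Closed form for the recursion
  have key : ∀ k, k ≤ t → x k = Real.sqrt (α k) • x 0 +
      ∑ i ∈ range k, (Real.sqrt (α k) *
        (Real.sqrt (1 / α (i+1) - 1) - Real.sqrt (1 / α i - 1))) • e (i+1) := by
    intro k hk
    induction k with
    | zero => simp [hα0]
    | succ n ih =>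
      have hn : n ≤ t := Nat.le_of_succ_le hk
      have hxn := ih hn
      have hr := hrec (n+1) (Nat.le_add_left 1 n) hk
      simp only [Nat.add_sub_cancel] at hr
      have hαn : 0 < α n := hαpos n hn
      have hαn1 : 0 ≤ α (n+1) := (hαpos (n+1) hk).le
      have hdiv : Real.sqrt (α (n+1) / α n) * Real.sqrt (α n) = Real.sqrt (α (n+1)) := by
        rw [← Real.sqrt_mul (by positivity), div_mul_cancel₀ _ (ne_of_gt hαn)]
      rw [hr, hxn, smul_add, Finset.smul_sum, Finset.sum_range_succ]
      simp only [smul_smul, ← mul_assoc, hdiv]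
      abel
  have hx := key t le_rfl
  rw [hx]
  have hsum : ∀ i ∈ range t,
      (Real.sqrt (α t) * (Real.sqrt (1 / α (i+1) - 1) - Real.sqrt (1 / α i - 1))) • e (i+1)
      = - (s i • g i) + (s i / Real.sqrt (1 - ᾱ (i + 1))) • δ (i + 1) := by
    intro i hi
    rw [Finset.mem_range] at hi
    have hi1 : i ≤ t - 1 := Nat.le_sub_one_of_lt hi
    have hit : i + 1 ≤ t := hi
    have hᾱi : 0 < 1 - ᾱ (i+1) := by linarith [hᾱlt i hi1]
    have hαt : 0 ≤ α t := (hαpos t le_rfl).le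
    have hssplit : s i = Real.sqrt (α t) * Real.sqrt (1 - ᾱ (i+1)) *
        (Real.sqrt (1 / α (i + 1) - 1) - Real.sqrt (1 / α i - 1)) := by
      rw [hs i hi1, Real.sqrt_mul hαt]
    have hsq : Real.sqrt (1 - ᾱ (i+1)) ≠ 0 := by positivity
    have hdivs : s i / Real.sqrt (1 - ᾱ (i+1)) =
        Real.sqrt (α t) * (Real.sqrt (1 / α (i + 1) - 1) - Real.sqrt (1 / α i - 1)) := by
      rw [hssplit]; field_simp
    rw [he (i+1) (Nat.le_add_left 1 i) hit]
    simp only [Nat.add_sub_cancel]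
    rw [smul_add, smul_smul, hdivs, hssplit]
    congr 1
    rw [← neg_smul]
    ring_nf
  rw [Finset.sum_congr rfl hsum, Finset.sum_add_distrib, Finset.sum_neg_distrib]
  abel
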